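/- For x, z ∈ ℝ³ with x ≠ 0 and x ≠ z, and λ > 0, define F(λ, x, z) = (1 − e^{(−1−i)λ|x−z|}) / (8π λ |x−z|) − (1 − e^{(−1−i)λ|x|}) / (8π λ |x|). Then there is a constant C such that for all 0 < λ ≤ 1, all such x, z, and each k = 0, 1, 2, |∂_λ^k F(λ, x, z)| ≤ C ⟨z⟩ / (min(⟨x⟩, |x−z|) · λ^k). -/

import Mathlib

open MeasureTheory Real Set Complex

noncomputable section

abbrev E3 := EuclideanSpace ℝ (Fin 3)

/-- Japanese bracket on ℝ³. -/
def jap (x : E3) : ℝ := Real.sqrt (1 + ‖x‖ ^ 2)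

/-- The auxiliary function `F(λ, x, z)`. -/
def F (l : ℝ) (x z : E3) : ℂ :=
  (1 - Complex.exp ((-1 - Complex.I) * l * ‖x - z‖)) / (8 * Real.pi * l * ‖x - z‖) -
    (1 - Complex.exp ((-1 - Complex.I) * l * ‖x‖)) / (8 * Real.pi * l * ‖x‖)

def cc : ℂ := -1 - Complex.I
def Ee (s : ℝ) : ℂ := Complex.exp (cc * s)
def p0 (s : ℝ) : ℂ := (1 - Ee s) / s
def d0 (s : ℝ) : ℂ := -cc * Ee s / s - (1 - Ee s) / (s:ℂ) ^ 2
def p1 (s : ℝ) : ℂ := -cc * Ee s - (1 - Ee s) / s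
def d1 (s : ℝ) : ℂ := -cc ^ 2 * Ee s + cc * Ee s / s + (1 - Ee s) / (s:ℂ) ^ 2
def p2 (s : ℝ) : ℂ := -cc ^ 2 * s * Ee s + 2 * cc * Ee s + 2 * (1 - Ee s) / s
def d2 (s : ℝ) : ℂ := cc ^ 2 * Ee s - cc ^ 3 * s * Ee s + 2 * d0 s
def e0 (s : ℝ) : ℂ := -cc ^ 2 * Ee s / s + 2 * cc * Ee s / (s:ℂ) ^ 2 + 2 * (1 - Ee s) / (s:ℂ) ^ 3

lemma hEe (s : ℝ) : HasDerivAt Ee (cc * Ee s) s := by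
  have h1 : HasDerivAt (fun s : ℝ => cc * (s : ℂ)) cc s := by
    simpa using ((hasDerivAt_id s).ofReal_comp).const_mul cc
  unfold Ee; simpa [mul_comm] using h1.cexp

lemma hcoe (s : ℝ) : HasDerivAt (fun u : ℝ => ((u : ℝ) : ℂ)) 1 s := (hasDerivAt_id s).ofReal_comp

lemma hcoe2 (s : ℝ) : HasDerivAt (fun u : ℝ => ((u : ℝ) : ℂ) ^ 2) (2 * s) s := by
  have := (hcoe s).mul (hcoe s)
  refine (this.congr_deriv (by ring)).congr_of_eventuallyEq ?_
  exact Filter.Eventually.of_forall (fun u => by simp [sq])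

lemma hp0 (s : ℝ) (hs : s ≠ 0) : HasDerivAt p0 (d0 s) s := by
  have hsc : (s : ℂ) ≠ 0 := by exact_mod_cast hs
  have hnum : HasDerivAt (fun u : ℝ => (1 : ℂ) - Ee u) (-(cc * Ee s)) s := (hEe s).const_sub 1
  have h := hnum.div (hcoe s) hsc
  have e : p0 = fun u : ℝ => (1 - Ee u) / ((u:ℝ):ℂ) := rfl
  rw [e]; refine h.congr_deriv ?_
  unfold d0; field_simp

lemma hd0 (s : ℝ) (hs : s ≠ 0) : HasDerivAt d0 (e0 s) s := by
  have hsc : (s : ℂ) ≠ 0 := by exact_mod_cast hs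
  have h1 : HasDerivAt (fun u : ℝ => -cc * Ee u) (-cc * (cc * Ee s)) s := (hEe s).const_mul (-cc)
  have h2 : HasDerivAt (fun u : ℝ => (1 : ℂ) - Ee u) (-(cc * Ee s)) s := (hEe s).const_sub 1
  have ha := h1.div (hcoe s) hsc
  have hb := h2.div (hcoe2 s) (pow_ne_zero 2 hsc)
  have e : d0 = fun u : ℝ => (-cc * Ee u) / ((u:ℝ):ℂ) - (1 - Ee u) / ((u:ℝ):ℂ) ^ 2 := rfl
  rw [e]; refine (ha.sub hb).congr_deriv ?_
  unfold e0; field_simp; ring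

lemma hp1 (s : ℝ) (hs : s ≠ 0) : HasDerivAt p1 (d1 s) s := by
  have hsc : (s : ℂ) ≠ 0 := by exact_mod_cast hs
  have h1 : HasDerivAt (fun u : ℝ => -cc * Ee u) (-cc * (cc * Ee s)) s := (hEe s).const_mul (-cc)
  have h2 : HasDerivAt (fun u : ℝ => (1 : ℂ) - Ee u) (-(cc * Ee s)) s := (hEe s).const_sub 1
  have hb := h2.div (hcoe s) hsc
  have e : p1 = fun u : ℝ => (-cc * Ee u) - (1 - Ee u) / ((u:ℝ):ℂ) := rfl
  rw [e]; refine (h1.sub hb).congr_deriv ?_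
  unfold d1; field_simp; ring

lemma hp2 (s : ℝ) (hs : s ≠ 0) : HasDerivAt p2 (d2 s) s := by
  have hsc : (s : ℂ) ≠ 0 := by exact_mod_cast hs
  have h1 : HasDerivAt (fun u : ℝ => -cc ^ 2 * (((u:ℝ):ℂ) * Ee u))
      (-cc ^ 2 * (1 * Ee s + (s:ℂ) * (cc * Ee s))) s := (((hcoe s).mul (hEe s))).const_mul _
  have h2 : HasDerivAt (fun u : ℝ => 2 * cc * Ee u) (2 * cc * (cc * Ee s)) s :=
    (hEe s).const_mul _
  have h3 : HasDerivAt (fun u : ℝ => (2 : ℂ) * (1 - Ee u)) (2 * -(cc * Ee s)) s :=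
    ((hEe s).const_sub 1).const_mul 2
  have hb := h3.div (hcoe s) hsc
  have e : p2 = fun u : ℝ =>
      -cc ^ 2 * (((u:ℝ):ℂ) * Ee u) + 2 * cc * Ee u + 2 * (1 - Ee u) / ((u:ℝ):ℂ) := by
    funext u; unfold p2; ring
  rw [e]; refine ((h1.add h2).add hb).congr_deriv ?_
  unfold d2 d0; field_simp; ring

lemma ncc : ‖cc‖ ≤ 3/2 := by
  rw [Complex.norm_def]
  have h : Complex.normSq cc = 2 := by
    simp [cc, Complex.normSq_apply]; norm_num
  rw [h]
  nlinarith [Real.sq_sqrt (by norm_num : (0:ℝ) ≤ 2), Real.sqrt_nonneg 2]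

lemma nEe (s : ℝ) : ‖Ee s‖ = Real.exp (-s) := by
  rw [Ee, Complex.norm_exp]
  congr 1
  simp [cc]

lemma nEe1 (s : ℝ) (hs : 0 ≤ s) : ‖Ee s‖ ≤ 1 := by
  rw [nEe]
  calc Real.exp (-s) ≤ Real.exp 0 := Real.exp_le_exp.mpr (by linarith)
  _ = 1 := Real.exp_zero

lemma rexp1 (s : ℝ) (hs : 0 ≤ s) : s * Real.exp (-s) ≤ 1 := by
  have h1 : s ≤ Real.exp s := by linarith [Real.add_one_le_exp s]
  calc s * Real.exp (-s) ≤ Real.exp s * Real.exp (-s) :=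
        mul_le_mul_of_nonneg_right h1 (Real.exp_pos _).le
  _ = 1 := by rw [← Real.exp_add]; simp

lemma rexp2 (s : ℝ) (hs : 0 ≤ s) : s ^ 2 * Real.exp (-s) ≤ 4 := by
  have h2 : s ^ 2 ≤ 4 * Real.exp s := by
    have h := Real.add_one_le_exp (s/2)
    have he : Real.exp (s/2) * Real.exp (s/2) = Real.exp s := by
      rw [← Real.exp_add]; ring_nf
    nlinarith [Real.exp_pos (s/2)]
  calc s ^ 2 * Real.exp (-s) ≤ (4 * Real.exp s) * Real.exp (-s) :=
        mul_le_mul_of_nonneg_right h2 (Real.exp_pos _).le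
  _ = 4 := by rw [mul_assoc, ← Real.exp_add]; simp

lemma rexp3 (s : ℝ) (hs : 0 ≤ s) : s ^ 3 * Real.exp (-s) ≤ 27 := by
  have h2 : s ^ 3 ≤ 27 * Real.exp s := by
    have h := Real.add_one_le_exp (s/3)
    have he : Real.exp (s/3) * Real.exp (s/3) * Real.exp (s/3) = Real.exp s := by
      rw [← Real.exp_add, ← Real.exp_add]; ring_nf
    have hu : s/3 ≤ Real.exp (s/3) := by linarith
    have h3 : (s/3)^3 ≤ (Real.exp (s/3))^3 := pow_le_pow_left₀ (by positivity) hu 3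
    have he3 : (Real.exp (s/3))^3 = Real.exp s := by rw [← he]; ring
    nlinarith [Real.exp_pos (s/3)]
  calc s ^ 3 * Real.exp (-s) ≤ (27 * Real.exp s) * Real.exp (-s) :=
        mul_le_mul_of_nonneg_right h2 (Real.exp_pos _).le
  _ = 27 := by rw [mul_assoc, ← Real.exp_add]; simp

lemma n1E (s : ℝ) (hs : 0 ≤ s) : ‖1 - Ee s‖ ≤ 2 := by
  calc ‖1 - Ee s‖ ≤ ‖(1:ℂ)‖ + ‖Ee s‖ := norm_sub_le _ _
  _ ≤ 1 + 1 := by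
      have := nEe1 s hs
      simp only [norm_one]
      linarith
  _ = 2 := by norm_num

lemma n1E' (s : ℝ) (hs : 0 ≤ s) (hs2 : s ≤ 1/2) : ‖1 - Ee s‖ ≤ 3 * s := by
  have habs : ‖cc * s‖ ≤ 1 := by
    rw [norm_mul]
    have : ‖((s:ℝ):ℂ)‖ = s := by
      rw [Complex.norm_of_nonneg hs]
    rw [this]
    calc ‖cc‖ * s ≤ (3/2) * (1/2) := by
          apply mul_le_mul (by exact_mod_cast ncc) hs2 hs (by norm_num)
    _ ≤ 1 := by norm_num
  have h := Complex.norm_exp_sub_one_le habs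
  rw [norm_sub_rev]
  have : ‖Ee s - 1‖ = ‖(Complex.exp (cc * s) - 1)‖ := by rw [Ee]
  rw [this]
  calc ‖(Complex.exp (cc * s) - 1)‖ ≤ 2 * ‖(cc * s)‖ := h
  _ = 2 * (‖cc‖ * s) := by rw [norm_mul, Complex.norm_of_nonneg hs]
  _ ≤ 2 * ((3/2) * s) := by
      have := ncc
      nlinarith
  _ = 3 * s := by ring

lemma nNum (s : ℝ) (hs : 0 ≤ s) (hs2 : s ≤ 1/2) : ‖1 - Ee s + cc * s * Ee s‖ ≤ 7 * s ^ 2 := by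
  set w : ℂ := cc * s with hw
  have habs : ‖w‖ ≤ 1 := by
    rw [hw, norm_mul]
    have : ‖((s:ℝ):ℂ)‖ = s := by rw [Complex.norm_of_nonneg hs]
    rw [this]
    have := ncc
    nlinarith [norm_nonneg cc]
  have key : (1 : ℂ) - Ee s + cc * s * Ee s = -(Complex.exp w - 1 - w) + w * (Complex.exp w - 1) := by
    rw [Ee, hw]; ring
  rw [key]
  have h1 := Complex.norm_exp_sub_one_sub_id_le habs
  have h2 := Complex.norm_exp_sub_one_le habs
  have haw : ‖w‖ ≤ (3/2) * s := by
    rw [hw, norm_mul, Complex.norm_of_nonneg hs]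
    have := ncc
    nlinarith
  calc ‖-(Complex.exp w - 1 - w) + w * (Complex.exp w - 1)‖
      ≤ ‖-(Complex.exp w - 1 - w)‖ + ‖w * (Complex.exp w - 1)‖ := norm_add_le _ _
  _ = ‖(Complex.exp w - 1 - w)‖ + ‖w‖ * ‖(Complex.exp w - 1)‖ := by
      rw [norm_neg, norm_mul]
  _ ≤ ‖w‖ ^ 2 + ‖w‖ * (2 * ‖w‖) := by
      exact add_le_add h1 (mul_le_mul_of_nonneg_left h2 (norm_nonneg w))
  _ = 3 * ‖w‖ ^ 2 := by ring
  _ ≤ 3 * ((3/2) * s) ^ 2 := by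
      have hnn := norm_nonneg w
      nlinarith
  _ ≤ 7 * s ^ 2 := by nlinarith

lemma bp0 (s : ℝ) (hs : 0 < s) : ‖p0 s‖ ≤ 4 := by
  have hns : ‖((s:ℝ):ℂ)‖ = s := by
    rw [Complex.norm_real, Real.norm_eq_abs, abs_of_pos hs]
  rw [p0, norm_div, hns]
  rcases le_or_gt s (1/2) with h | h
  · rw [div_le_iff₀ hs]
    calc ‖1 - Ee s‖ ≤ 3 * s := n1E' s hs.le h
    _ ≤ 4 * s := by nlinarith
  · rw [div_le_iff₀ hs]
    calc ‖1 - Ee s‖ ≤ 2 := n1E s hs.le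
    _ ≤ 4 * s := by nlinarith

lemma d0_eq (s : ℝ) (hs : s ≠ 0) :
    d0 s = -((1 - Ee s + cc * s * Ee s) / (s:ℂ) ^ 2) := by
  have hsc : (s : ℂ) ≠ 0 := by exact_mod_cast hs
  rw [d0]; field_simp; ring

lemma bd0 (s : ℝ) (hs : 0 < s) : ‖d0 s‖ ≤ 20 / (1 + s ^ 2) := by
  have hpos : (0:ℝ) < 1 + s ^ 2 := by positivity
  have hns : ‖((s:ℝ):ℂ) ^ 2‖ = s ^ 2 := by
    rw [norm_pow, Complex.norm_real, Real.norm_eq_abs, abs_of_pos hs]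
  rw [d0_eq s hs.ne', norm_neg, norm_div, hns, div_le_div_iff₀ (by positivity) hpos]
  rcases le_or_gt s (1/2) with h | h
  · have hn := nNum s hs.le h
    have hs2 : s ^ 2 ≤ 1/4 := by nlinarith
    nlinarith [mul_le_mul_of_nonneg_right hn hpos.le, sq_nonneg s,
      mul_le_mul_of_nonneg_right hs2 (sq_nonneg s)]
  · have hb : ‖1 - Ee s + cc * s * Ee s‖ ≤ 2 + (3/2) * (s * Real.exp (-s)) := by
      calc ‖1 - Ee s + cc * s * Ee s‖ ≤ ‖1 - Ee s‖ + ‖cc * s * Ee s‖ := norm_add_le _ _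
      _ ≤ 2 + (3/2) * (s * Real.exp (-s)) := by
          have h2 : ‖cc * s * Ee s‖ = ‖cc‖ * s * Real.exp (-s) := by
            rw [norm_mul, norm_mul, Complex.norm_real, Real.norm_eq_abs, abs_of_pos hs, nEe]
          rw [h2]
          have := n1E s hs.le
          have := ncc
          nlinarith [Real.exp_pos (-s), mul_nonneg hs.le (Real.exp_pos (-s)).le]
    have he1 : s * Real.exp (-s) ≤ 1 := rexp1 s hs.le
    have hse : 0 ≤ s * Real.exp (-s) := mul_nonneg hs.le (Real.exp_pos _).le
    calc ‖1 - Ee s + cc * s * Ee s‖ * (1 + s ^ 2) ≤ (2 + 3/2) * (1 + s ^ 2) := by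
          nlinarith [norm_nonneg (1 - Ee s + cc * s * Ee s)]
    _ ≤ 20 * s ^ 2 := by nlinarith


lemma sp1 (s : ℝ) (hs : s ≠ 0) : (s : ℂ) * d0 s = p1 s := by
  have hsc : (s : ℂ) ≠ 0 := by exact_mod_cast hs
  rw [d0, p1]; field_simp

lemma sp2 (s : ℝ) (hs : s ≠ 0) : (s : ℂ) ^ 2 * e0 s = p2 s := by
  have hsc : (s : ℂ) ≠ 0 := by exact_mod_cast hs
  rw [e0, p2]; field_simp

lemma bp1 (s : ℝ) (hs : 0 < s) : ‖p1 s‖ ≤ 6 := by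
  have he : p1 s = -cc * Ee s - p0 s := rfl
  rw [he]
  calc ‖-cc * Ee s - p0 s‖ ≤ ‖-cc * Ee s‖ + ‖p0 s‖ := norm_sub_le _ _
  _ ≤ (3/2) * 1 + 4 := by
      rw [norm_mul, norm_neg]
      exact add_le_add (mul_le_mul ncc (nEe1 s hs.le) (norm_nonneg _) (by norm_num)) (bp0 s hs)
  _ ≤ 6 := by norm_num

lemma bd1 (s : ℝ) (hs : 0 < s) : ‖d1 s‖ ≤ 40 / (1 + s ^ 2) := by
  have hpos : (0:ℝ) < 1 + s ^ 2 := by positivity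
  have he : d1 s = -cc ^ 2 * Ee s - d0 s := by rw [d1, d0]; ring
  have h1 : ‖d1 s‖ ≤ (3/2) ^ 2 * Real.exp (-s) + ‖d0 s‖ := by
    rw [he]
    calc ‖-cc ^ 2 * Ee s - d0 s‖ ≤ ‖-cc ^ 2 * Ee s‖ + ‖d0 s‖ := norm_sub_le _ _
    _ ≤ (3/2) ^ 2 * Real.exp (-s) + ‖d0 s‖ := by
        rw [norm_mul, norm_neg, norm_pow, nEe]
        gcongr <;> first | exact ncc | exact norm_nonneg cc
  have hd := bd0 s hs
  rw [le_div_iff₀ hpos] at hd ⊢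
  have h2 := rexp2 s hs.le
  have h3 : Real.exp (-s) ≤ 1 := by
    calc Real.exp (-s) ≤ Real.exp 0 := Real.exp_le_exp.mpr (by linarith)
    _ = 1 := Real.exp_zero
  nlinarith [norm_nonneg (d0 s), Real.exp_pos (-s), mul_le_mul_of_nonneg_right h1 hpos.le]

lemma bp2 (s : ℝ) (hs : 0 < s) : ‖p2 s‖ ≤ 20 := by
  have he : p2 s = -cc ^ 2 * s * Ee s + 2 * cc * Ee s + 2 * p0 s := by rw [p2, p0]; ring
  have h1 : ‖-cc ^ 2 * s * Ee s‖ = ‖cc‖ ^ 2 * (s * Real.exp (-s)) := by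
    rw [norm_mul, norm_mul, norm_neg, norm_pow, nEe, Complex.norm_real, Real.norm_eq_abs,
      _root_.abs_of_pos hs]; ring
  have h2 : ‖2 * cc * Ee s‖ ≤ 2 * (3/2) * 1 := by
    rw [norm_mul, norm_mul]
    have h2' : ‖(2:ℂ)‖ = 2 := by norm_num
    rw [h2']
    have := nEe1 s hs.le
    have := ncc
    nlinarith [norm_nonneg cc, norm_nonneg (Ee s)]
  have h3 : ‖(2:ℂ) * p0 s‖ ≤ 2 * 4 := by
    rw [norm_mul]
    have h2' : ‖(2:ℂ)‖ = 2 := by norm_num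
    rw [h2']
    nlinarith [bp0 s hs, norm_nonneg (p0 s)]
  have h4 : ‖cc‖ ^ 2 * (s * Real.exp (-s)) ≤ (3/2)^2 * 1 := by
    have := ncc
    have := rexp1 s hs.le
    have h5 : 0 ≤ s * Real.exp (-s) := mul_nonneg hs.le (Real.exp_pos _).le
    nlinarith [norm_nonneg cc]
  rw [he]
  calc ‖-cc ^ 2 * s * Ee s + 2 * cc * Ee s + 2 * p0 s‖
      ≤ ‖-cc ^ 2 * s * Ee s‖ + ‖2 * cc * Ee s‖ + ‖(2:ℂ) * p0 s‖ := by
        exact (norm_add_le _ _).trans (by gcongr; exact norm_add_le _ _)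
  _ ≤ (3/2)^2 * 1 + 2 * (3/2) * 1 + 2 * 4 := by rw [h1]; gcongr <;> linarith
  _ ≤ 20 := by norm_num

lemma bd2 (s : ℝ) (hs : 0 < s) : ‖d2 s‖ ≤ 200 / (1 + s ^ 2) := by
  have hpos : (0:ℝ) < 1 + s ^ 2 := by positivity
  have h1 : ‖cc ^ 2 * Ee s‖ ≤ (3/2)^2 * Real.exp (-s) := by
    rw [norm_mul, norm_pow, nEe]
    gcongr <;> first | exact ncc | exact norm_nonneg cc
  have h2 : ‖cc ^ 3 * s * Ee s‖ ≤ (3/2)^3 * (s * Real.exp (-s)) := by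
    rw [norm_mul, norm_mul, norm_pow, nEe, Complex.norm_real, Real.norm_eq_abs,
      _root_.abs_of_pos hs]
    have h5 : ‖cc‖ ^ 3 ≤ (3/2)^3 := by
      gcongr
      first | exact ncc | exact norm_nonneg cc
    nlinarith [Real.exp_pos (-s), pow_nonneg (norm_nonneg cc) 3,
      mul_pos hs (Real.exp_pos (-s))]
  have htri : ‖d2 s‖ ≤ ‖cc ^ 2 * Ee s‖ + ‖cc ^ 3 * s * Ee s‖ + 2 * ‖d0 s‖ := by
    rw [d2]
    calc ‖cc ^ 2 * Ee s - cc ^ 3 * s * Ee s + 2 * d0 s‖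
        ≤ ‖cc ^ 2 * Ee s - cc ^ 3 * s * Ee s‖ + ‖(2:ℂ) * d0 s‖ := norm_add_le _ _
    _ ≤ ‖cc ^ 2 * Ee s‖ + ‖cc ^ 3 * s * Ee s‖ + 2 * ‖d0 s‖ := by
        rw [norm_mul]
        have h2' : ‖(2:ℂ)‖ = 2 := by norm_num
        rw [h2']
        gcongr
        exact norm_sub_le _ _
  have hd := bd0 s hs
  rw [le_div_iff₀ hpos] at hd ⊢
  have e1 : Real.exp (-s) ≤ 1 := by
    calc Real.exp (-s) ≤ Real.exp 0 := Real.exp_le_exp.mpr (by linarith)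
    _ = 1 := Real.exp_zero
  have e2 := rexp1 s hs.le
  have e3 := rexp2 s hs.le
  have e4 := rexp3 s hs.le
  have hn : ‖d2 s‖ ≤ (3/2)^2 * Real.exp (-s) + (3/2)^3 * (s * Real.exp (-s)) + 2 * ‖d0 s‖ := by
    linarith
  nlinarith [norm_nonneg (d0 s), Real.exp_pos (-s),
    mul_le_mul_of_nonneg_right hn hpos.le, mul_nonneg hs.le (Real.exp_pos (-s)).le]

lemma mvt (ψ dψ : ℝ → ℂ) (K : ℝ) (hK0 : 0 ≤ K)
    (hd : ∀ s, 0 < s → HasDerivAt ψ (dψ s) s)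
    (hK : ∀ s, 0 < s → ‖dψ s‖ ≤ K / (1 + s ^ 2))
    (a b : ℝ) (ha : 0 < a) (hb : 0 < b) :
    ‖ψ a - ψ b‖ ≤ K / (1 + min a b ^ 2) * |a - b| := by
  set u := min a b with hu
  set v := max a b with hv
  have hu0 : 0 < u := lt_min ha hb
  have hC : ∀ t ∈ Icc u v, ‖dψ t‖ ≤ K / (1 + u ^ 2) := by
    intro t ht
    have ht0 : 0 < t := lt_of_lt_of_le hu0 ht.1
    calc ‖dψ t‖ ≤ K / (1 + t ^ 2) := hK t ht0
    _ ≤ K / (1 + u ^ 2) := by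
        gcongr <;> nlinarith [ht.1, hu0.le, hK0]
  have hD : ∀ t ∈ Icc u v, HasDerivWithinAt ψ (dψ t) (Icc u v) t := fun t ht =>
    (hd t (lt_of_lt_of_le hu0 ht.1)).hasDerivWithinAt
  have hmem_a : a ∈ Icc u v := ⟨min_le_left a b, le_max_left a b⟩
  have hmem_b : b ∈ Icc u v := ⟨min_le_right a b, le_max_right a b⟩
  have := (convex_Icc u v).norm_image_sub_le_of_norm_hasDerivWithin_le hD hC hmem_b hmem_a
  calc ‖ψ a - ψ b‖ ≤ K / (1 + u ^ 2) * ‖a - b‖ := this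
  _ = K / (1 + u ^ 2) * |a - b| := by rw [Real.norm_eq_abs]

lemma keyEst (ψ dψ : ℝ → ℂ) (M K : ℝ) (hM0 : 0 ≤ M) (hK0 : 0 ≤ K)
    (hMb : ∀ s, 0 < s → ‖ψ s‖ ≤ M)
    (hd : ∀ s, 0 < s → HasDerivAt ψ (dψ s) s)
    (hKb : ∀ s, 0 < s → ‖dψ s‖ ≤ K / (1 + s ^ 2))
    (l r₁ r₂ zn jz m : ℝ) (hl : 0 < l) (hr₁ : 0 < r₁) (hr₂ : 0 < r₂)
    (hdiff : |r₁ - r₂| ≤ zn) (hzn : zn ≤ jz) (h1z : 1 ≤ jz) (hm : 0 < m) (hmr : m ≤ r₁) :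
    ‖ψ (l * r₁) - ψ (l * r₂)‖ ≤ (4 * M + K) * jz / m := by
  have hz0 : 0 ≤ zn := (abs_nonneg _).trans hdiff
  set a := l * r₁ with hadef
  set b := l * r₂ with hbdef
  have ha : 0 < a := mul_pos hl hr₁
  have hb : 0 < b := mul_pos hl hr₂
  rcases le_or_gt m (2 * jz) with hcase | hcase
  · -- small m : crude bound
    have h1 : ‖ψ a - ψ b‖ ≤ 2 * M := by
      calc ‖ψ a - ψ b‖ ≤ ‖ψ a‖ + ‖ψ b‖ := norm_sub_le _ _
      _ ≤ 2 * M := by linarith [hMb a ha, hMb b hb]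
    rw [le_div_iff₀ hm]
    nlinarith [mul_le_mul h1 hcase hm.le (by linarith : (0:ℝ) ≤ 2 * M),
      mul_nonneg hK0 (by linarith : (0:ℝ) ≤ jz)]
  · -- large m : mean value estimate
    have hr2b : r₁ / 2 ≤ r₂ := by
      have : r₁ - r₂ ≤ zn := (le_abs_self _).trans hdiff
      linarith
    have hba : a / 2 ≤ b := by
      rw [hadef, hbdef]
      calc l * r₁ / 2 = l * (r₁ / 2) := by ring
      _ ≤ l * r₂ := by gcongr
    have hmin : a / 2 ≤ min a b := le_min (by linarith) hba
    have h1 := mvt ψ dψ K hK0 hd hKb a b ha hb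
    have habs : |a - b| ≤ l * zn := by
      rw [hadef, hbdef, ← mul_sub, abs_mul, _root_.abs_of_pos hl]
      gcongr
    have hden : (0:ℝ) < 1 + min a b ^ 2 := by positivity
    have hden2 : (0:ℝ) < 1 + (a/2) ^ 2 := by positivity
    have h2 : ‖ψ a - ψ b‖ ≤ K / (1 + (a/2) ^ 2) * (l * zn) := by
      calc ‖ψ a - ψ b‖ ≤ K / (1 + min a b ^ 2) * |a - b| := h1
      _ ≤ K / (1 + (a/2) ^ 2) * (l * zn) := by
          apply mul_le_mul _ habs (abs_nonneg _) (by positivity)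
          gcongr <;> nlinarith [hmin, ha, hK0]
    have hlm : l * m ≤ 1 + (a/2) ^ 2 := by
      have h3 : l * m ≤ a := by rw [hadef]; gcongr
      nlinarith [sq_nonneg (a/2 - 1)]
    calc ‖ψ a - ψ b‖ ≤ K / (1 + (a/2) ^ 2) * (l * zn) := h2
    _ ≤ (4 * M + K) * jz / m := by
        rw [div_mul_eq_mul_div, div_le_div_iff₀ hden2 hm]
        have e1 : K * (l * zn) * m = K * zn * (l * m) := by ring
        rw [e1]
        calc K * zn * (l * m) ≤ K * zn * (1 + (a/2) ^ 2) :=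
              mul_le_mul_of_nonneg_left hlm (by positivity)
        _ ≤ (4 * M + K) * jz * (1 + (a/2) ^ 2) := by
            apply mul_le_mul_of_nonneg_right _ hden2.le
            nlinarith
lemma jap_ge_one (x : E3) : 1 ≤ jap x := by
  rw [jap]
  calc (1:ℝ) = Real.sqrt 1 := Real.sqrt_one.symm
  _ ≤ Real.sqrt (1 + ‖x‖ ^ 2) := Real.sqrt_le_sqrt (by nlinarith [sq_nonneg ‖x‖])

lemma jap_ge_norm (x : E3) : ‖x‖ ≤ jap x := by
  rw [jap]
  calc ‖x‖ = Real.sqrt (‖x‖ ^ 2) := (Real.sqrt_sq (norm_nonneg x)).symm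
  _ ≤ Real.sqrt (1 + ‖x‖ ^ 2) := Real.sqrt_le_sqrt (by nlinarith)

theorem stmt7 :
    ∃ C : ℝ, ∀ (l : ℝ), 0 < l → l ≤ 1 → ∀ (x z : E3), x ≠ 0 → x ≠ z → ∀ k : ℕ, k ≤ 2 →
      ‖iteratedDeriv k (fun t : ℝ => F t x z) l‖
        ≤ C * jap z / (min (jap x) ‖x - z‖ * l ^ k) := by
  use 1000
  intro l hl hl1 x z hx hxz k hk
  set r₁ := ‖x - z‖ with hr₁def
  set r₂ := ‖x‖ with hr₂def
  have hr₁ : 0 < r₁ := by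
    rw [hr₁def, norm_pos_iff, sub_ne_zero]; exact hxz
  have hr₂ : 0 < r₂ := by rw [hr₂def, norm_pos_iff]; exact hx
  have hjx1 : 1 ≤ jap x := jap_ge_one x
  have hjz1 : 1 ≤ jap z := jap_ge_one z
  have hjzz : ‖z‖ ≤ jap z := jap_ge_norm z
  set m := min (jap x) r₁ with hmdef
  have hm : 0 < m := lt_min (by linarith) hr₁
  have hmr : m ≤ r₁ := min_le_right _ _
  have hdiff : |r₁ - r₂| ≤ ‖z‖ := by
    have h := abs_norm_sub_norm_le (x - z) x
    simpa using h
  have hπ : (0:ℝ) < Real.pi := Real.pi_pos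
  have h8 : (1:ℝ) ≤ 8 * Real.pi := by nlinarith [Real.pi_gt_three]
  have hlc : (l:ℂ) ≠ 0 := by exact_mod_cast hl.ne'
  set Gf : ℝ → ℂ := fun t => (p0 (t * r₁) - p0 (t * r₂)) / (8 * (Real.pi:ℂ)) with hGfdef
  have hFG : ∀ t : ℝ, 0 < t → F t x z = Gf t := by
    intro t ht
    have ht1 : ((t * r₁ : ℝ) : ℂ) ≠ 0 := by
      exact_mod_cast (mul_pos ht hr₁).ne'
    have ht2 : ((t * r₂ : ℝ) : ℂ) ≠ 0 := by
      exact_mod_cast (mul_pos ht hr₂).ne'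
    have hπc : ((Real.pi : ℝ) : ℂ) ≠ 0 := by exact_mod_cast hπ.ne'
    rw [F, hGfdef]
    show _ = (p0 (t * r₁) - p0 (t * r₂)) / (8 * (Real.pi:ℂ))
    rw [← hr₁def, ← hr₂def]
    conv_rhs => rw [sub_div]
    congr 1
    · rw [p0, Ee, div_div]
      congr 1
      · rw [show (-1 - Complex.I) * t * r₁ = cc * ((t * r₁ : ℝ) : ℂ) by
          rw [cc]; push_cast; ring]
      · push_cast; ring
    · rw [p0, Ee, div_div]
      congr 1
      · rw [show (-1 - Complex.I) * t * r₂ = cc * ((t * r₂ : ℝ) : ℂ) by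
          rw [cc]; push_cast; ring]
      · push_cast; ring
  have hev : (fun t : ℝ => F t x z) =ᶠ[nhds l] Gf := by
    filter_upwards [eventually_gt_nhds hl] with t ht using hFG t ht
  have hIter : iteratedDeriv k (fun t : ℝ => F t x z) l = iteratedDeriv k Gf l :=
    Filter.EventuallyEq.iteratedDeriv_eq k hev
  have hcomp : ∀ r : ℝ, 0 < r → ∀ t : ℝ, 0 < t →
      HasDerivAt (fun u : ℝ => p0 (u * r)) ((r:ℂ) * d0 (t * r)) t := by
    intro r hr t ht
    have h := (hp0 (t * r) (mul_pos ht hr).ne').scomp t ((hasDerivAt_id t).mul_const r)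
    simpa [Function.comp_def, Complex.real_smul, mul_comm] using h
  have hcompd : ∀ r : ℝ, 0 < r → ∀ t : ℝ, 0 < t →
      HasDerivAt (fun u : ℝ => (r:ℂ) * d0 (u * r)) ((r:ℂ)^2 * e0 (t * r)) t := by
    intro r hr t ht
    have h := ((hd0 (t * r) (mul_pos ht hr).ne').scomp t
      ((hasDerivAt_id t).mul_const r)).const_mul (r:ℂ)
    have h' : HasDerivAt (fun u : ℝ => (r:ℂ) * d0 (u * r)) ((r:ℂ) * ((r:ℂ) * e0 (t * r))) t := by
      simpa [Function.comp_def, Complex.real_smul, mul_comm] using h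
    convert h' using 1
    ring
  set Gf1 : ℝ → ℂ := fun t => ((r₁:ℂ) * d0 (t * r₁) - (r₂:ℂ) * d0 (t * r₂)) / (8 * (Real.pi:ℂ))
    with hGf1def
  have hGfd : ∀ t : ℝ, 0 < t → HasDerivAt Gf (Gf1 t) t := fun t ht =>
    ((hcomp r₁ hr₁ t ht).sub (hcomp r₂ hr₂ t ht)).div_const _
  have hGf1d : ∀ t : ℝ, 0 < t → HasDerivAt Gf1
      (((r₁:ℂ)^2 * e0 (t * r₁) - (r₂:ℂ)^2 * e0 (t * r₂)) / (8 * (Real.pi:ℂ))) t := fun t ht =>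
    ((hcompd r₁ hr₁ t ht).sub (hcompd r₂ hr₂ t ht)).div_const _
  have hnorm8 : ‖(8:ℂ) * (Real.pi:ℂ)‖ = 8 * Real.pi := by
    rw [norm_mul, Complex.norm_real, Real.norm_eq_abs, _root_.abs_of_pos hπ]
    norm_num
  -- key estimates
  have K0 := keyEst p0 d0 4 20 (by norm_num) (by norm_num) (fun s hs => bp0 s hs)
    (fun s hs => hp0 s hs.ne') (fun s hs => bd0 s hs) l r₁ r₂ ‖z‖ (jap z) m
    hl hr₁ hr₂ hdiff hjzz hjz1 hm hmr
  have K1 := keyEst p1 d1 6 40 (by norm_num) (by norm_num) (fun s hs => bp1 s hs)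
    (fun s hs => hp1 s hs.ne') (fun s hs => bd1 s hs) l r₁ r₂ ‖z‖ (jap z) m
    hl hr₁ hr₂ hdiff hjzz hjz1 hm hmr
  have K2 := keyEst p2 d2 20 200 (by norm_num) (by norm_num) (fun s hs => bp2 s hs)
    (fun s hs => hp2 s hs.ne') (fun s hs => bd2 s hs) l r₁ r₂ ‖z‖ (jap z) m
    hl hr₁ hr₂ hdiff hjzz hjz1 hm hmr
  have hjz0 : (0:ℝ) ≤ jap z := by linarith
  interval_cases k
  · -- k = 0
    rw [hIter, iteratedDeriv_zero, hGfdef]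
    rw [pow_zero, mul_one]
    simp only []
    rw [norm_div, hnorm8]
    calc ‖p0 (l * r₁) - p0 (l * r₂)‖ / (8 * Real.pi) ≤ ‖p0 (l * r₁) - p0 (l * r₂)‖ :=
          div_le_self (norm_nonneg _) h8
    _ ≤ (4 * 4 + 20) * jap z / m := K0
    _ ≤ 1000 * jap z / m := by
        apply (div_le_div_iff_of_pos_right hm).mpr
        nlinarith
  · -- k = 1
    rw [hIter, iteratedDeriv_one, (hGfd l hl).deriv, hGf1def]
    have e1 : (r₁:ℂ) * d0 (l * r₁) = p1 (l * r₁) / (l:ℂ) := by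
      rw [eq_div_iff hlc, ← sp1 (l * r₁) (mul_pos hl hr₁).ne']
      push_cast; ring
    have e2 : (r₂:ℂ) * d0 (l * r₂) = p1 (l * r₂) / (l:ℂ) := by
      rw [eq_div_iff hlc, ← sp1 (l * r₂) (mul_pos hl hr₂).ne']
      push_cast; ring
    have hnl : ‖((l:ℝ):ℂ)‖ = l := by
      rw [Complex.norm_real, Real.norm_eq_abs, _root_.abs_of_pos hl]
    show ‖((r₁:ℂ) * d0 (l * r₁) - (r₂:ℂ) * d0 (l * r₂)) / (8 * (Real.pi:ℂ))‖ ≤ _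
    rw [e1, e2, div_sub_div_same, norm_div, norm_div, hnorm8, hnl, pow_one]
    have hK1' := (le_div_iff₀ hm).mp K1
    rw [div_div, div_le_div_iff₀ (by positivity) (by positivity)]
    nlinarith [mul_le_mul_of_nonneg_right hK1' hl.le,
      mul_nonneg (mul_nonneg hjz0 hl.le)
        (by nlinarith [Real.pi_gt_three] : (0:ℝ) ≤ 1000 * (8 * Real.pi) - (4 * 6 + 40)),
      norm_nonneg (p1 (l * r₁) - p1 (l * r₂))]
  · -- k = 2
    have hder : deriv Gf =ᶠ[nhds l] Gf1 := by
      filter_upwards [eventually_gt_nhds hl] with t ht using (hGfd t ht).deriv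
    have h2eq : iteratedDeriv 2 Gf l
        = ((r₁:ℂ)^2 * e0 (l * r₁) - (r₂:ℂ)^2 * e0 (l * r₂)) / (8 * (Real.pi:ℂ)) := by
      rw [show (2:ℕ) = 1 + 1 from rfl, iteratedDeriv_succ, iteratedDeriv_one]
      rw [Filter.EventuallyEq.deriv_eq hder]
      exact (hGf1d l hl).deriv
    rw [hIter, h2eq]
    have e1 : (r₁:ℂ)^2 * e0 (l * r₁) = p2 (l * r₁) / (l:ℂ)^2 := by
      rw [eq_div_iff (pow_ne_zero 2 hlc), ← sp2 (l * r₁) (mul_pos hl hr₁).ne']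
      push_cast; ring
    have e2 : (r₂:ℂ)^2 * e0 (l * r₂) = p2 (l * r₂) / (l:ℂ)^2 := by
      rw [eq_div_iff (pow_ne_zero 2 hlc), ← sp2 (l * r₂) (mul_pos hl hr₂).ne']
      push_cast; ring
    have hnl : ‖((l:ℝ):ℂ)^2‖ = l^2 := by
      rw [norm_pow, Complex.norm_real, Real.norm_eq_abs, _root_.abs_of_pos hl]
    rw [e1, e2, div_sub_div_same, norm_div, norm_div, hnorm8, hnl]
    have hK2' := (le_div_iff₀ hm).mp K2
    have hl2 : (0:ℝ) < l^2 := by positivity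
    rw [div_div, div_le_div_iff₀ (by positivity) (by positivity)]
    calc ‖p2 (l * r₁) - p2 (l * r₂)‖ * (m * l ^ 2)
        = (‖p2 (l * r₁) - p2 (l * r₂)‖ * m) * l ^ 2 := by ring
    _ ≤ ((4 * 20 + 200) * jap z) * l ^ 2 := mul_le_mul_of_nonneg_right hK2' hl2.le
    _ ≤ 1000 * jap z * (l ^ 2 * (8 * Real.pi)) := by
        nlinarith [mul_nonneg hjz0 hl2.le, Real.pi_gt_three]


end
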